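/- For every real number x with 0 < x < 1, we have - ∑_{k=1}^{∞} (μ(k)/k) · log(1 - x^k) = x. -/

import Mathlib

open Real

/-- For 0 < x < 1, -∑_{k=1}^∞ (μ(k)/k) log(1 - x^k) = x. -/
theorem moebius_log_series (x : ℝ) (hx0 : 0 < x) (hx1 : x < 1) :
    -∑' k : ℕ, ((ArithmeticFunction.moebius (k + 1) : ℝ) / (k + 1 : ℝ)) *
        Real.log (1 - x ^ (k + 1)) = x := by
  have hx0' : (0:ℝ) ≤ x := hx0.le
  set G : ℕ → ℝ := fun m => x ^ m / m with hGdef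
  have hG0 : G 0 = 0 := by simp [hGdef]
  set F : ℕ × ℕ → ℝ := fun p => ((ArithmeticFunction.moebius p.1 : ℤ) : ℝ) * G (p.1 * p.2)
    with hFdef
  -- F vanishes when either coordinate is zero
  have hF1 : ∀ n, F (0, n) = 0 := by intro n; simp [hFdef]
  have hF2 : ∀ k, F (k, 0) = 0 := by intro k; simp [hFdef, hG0]
  -- Summability of F
  have hgeo : Summable (fun k : ℕ => x ^ k) := summable_geometric_of_lt_one hx0' hx1
  have hbd : Summable (fun p : ℕ × ℕ => x ^ p.1 * x ^ p.2 * x⁻¹) :=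
    (hgeo.mul_of_nonneg hgeo (fun k => pow_nonneg hx0' k)
      (fun k => pow_nonneg hx0' k)).mul_right x⁻¹
  have hFsum : Summable F := by
    apply Summable.of_norm_bounded hbd
    rintro ⟨k, n⟩
    rcases Nat.eq_zero_or_pos k with rfl | hk
    · rw [hF1]
      simp only [norm_zero]
      positivity
    rcases Nat.eq_zero_or_pos n with rfl | hn
    · rw [hF2]
      simp only [norm_zero]
      positivity
    have hkn : 1 ≤ k * n := Nat.one_le_iff_ne_zero.mpr (Nat.mul_ne_zero hk.ne' hn.ne')
    have h1 : ‖F (k, n)‖ ≤ x ^ (k * n) := by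
      rw [hFdef]
      simp only [norm_mul]
      have hμ : ‖((ArithmeticFunction.moebius k : ℤ) : ℝ)‖ ≤ 1 := by
        rw [Real.norm_eq_abs, ← Int.cast_abs]
        exact_mod_cast ArithmeticFunction.abs_moebius_le_one
      have hGle : ‖G (k * n)‖ ≤ x ^ (k * n) := by
        rw [hGdef, Real.norm_eq_abs, abs_div, abs_of_nonneg (pow_nonneg hx0' _),
          abs_of_nonneg (by positivity : (0:ℝ) ≤ ((k*n : ℕ):ℝ))]
        apply div_le_self (pow_nonneg hx0' _)
        exact_mod_cast hkn
      calc ‖((ArithmeticFunction.moebius k : ℤ) : ℝ)‖ * ‖G (k * n)‖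
          ≤ 1 * (x ^ (k * n)) := by
            apply mul_le_mul hμ hGle (norm_nonneg _) zero_le_one
        _ = x ^ (k * n) := one_mul _
    refine h1.trans ?_
    have hexp : k + n - 1 ≤ k * n := by
      have hk1 : 1 ≤ (k:ℤ) := by exact_mod_cast hk
      have hn1 : 1 ≤ (n:ℤ) := by exact_mod_cast hn
      have h2 : k + n ≤ k * n + 1 := by
        zify
        nlinarith
      omega
    have hpow : x ^ (k * n) ≤ x ^ (k + n - 1) := pow_le_pow_of_le_one hx0' hx1.le hexp
    refine hpow.trans_eq ?_
    have hkn1 : k + n - 1 + 1 = k + n := by omega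
    show x ^ (k + n - 1) = x ^ k * x ^ n * x⁻¹
    rw [eq_comm, mul_inv_eq_iff_eq_mul₀ hx0.ne', ← pow_add, ← pow_succ, hkn1]
  -- Fiberwise sums over the second coordinate
  set h : ℕ → ℝ := fun k => -(((ArithmeticFunction.moebius k : ℤ) : ℝ) / k *
      Real.log (1 - x ^ k)) with hhdef
  have hxk : ∀ k : ℕ, 1 ≤ k → |x ^ k| < 1 := by
    intro k hk
    rw [abs_of_nonneg (pow_nonneg hx0' k)]
    exact pow_lt_one₀ hx0' hx1 (by omega)
  have hfib : ∀ k : ℕ, HasSum (fun n => F (k, n)) (h k) := by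
    intro k
    rcases Nat.eq_zero_or_pos k with rfl | hk
    · have : (fun n => F (0, n)) = fun _ => (0:ℝ) := funext hF1
      rw [this, hhdef]
      simpa using hasSum_zero
    have hlog := (hasSum_pow_div_log_of_abs_lt_one (hxk k hk)).mul_left
      (((ArithmeticFunction.moebius k : ℤ) : ℝ) / k)
    have heq : (fun n : ℕ => ((ArithmeticFunction.moebius k : ℤ) : ℝ) / k *
        ((x ^ k) ^ (n + 1) / (n + 1))) = fun n : ℕ => F (k, n + 1) := by
      funext n
      rw [hFdef, hGdef]
      simp only
      rw [← pow_mul]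
      have hk' : ((k:ℝ)) ≠ 0 := Nat.cast_ne_zero.mpr hk.ne'
      have hn' : ((n:ℝ)) + 1 ≠ 0 := by positivity
      rw [Nat.cast_mul]
      push_cast
      field_simp
      try ring
    rw [heq] at hlog
    have := (hasSum_nat_add_iff (f := fun n => F (k, n)) 1).mp hlog
    simpa [hF2, hhdef] using this
  have hprod : HasSum h (∑' p, F p) := hFsum.hasSum.prod_fiberwise hfib
  have hh0 : h 0 = 0 := by simp [hhdef]
  have hshift : HasSum (fun k => h (k + 1)) (∑' p, F p) := by
    rw [hasSum_nat_add_iff (f := h) 1]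
    simpa [hh0] using hprod
  -- Regroup the double sum by the product of indices
  have hfiber := hFsum.hasSum.tsum_fiberwise (fun p => p.1 * p.2)
  have hfibeq : (fun m : ℕ => ∑' b : (fun p : ℕ × ℕ => p.1 * p.2) ⁻¹' {m}, F b) =
      fun m : ℕ => if m = 1 then x else 0 := by
    funext m
    rcases Nat.eq_zero_or_pos m with rfl | hm
    · have : ∀ b : (fun p : ℕ × ℕ => p.1 * p.2) ⁻¹' {0}, F b = 0 := by
        rintro ⟨⟨k, n⟩, hb⟩
        have : k * n = 0 := hb
        simp only [hFdef]
        rw [this, hG0, mul_zero]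
      simp [this]
    have hm' : m ≠ 0 := hm.ne'
    rw [show (fun p : ℕ × ℕ => p.1 * p.2) ⁻¹' {m} = ↑(m.divisorsAntidiagonal) by
        ext p; simp [Nat.mem_divisorsAntidiagonal, hm'],
      Finset.tsum_subtype' m.divisorsAntidiagonal F]
    have : ∑ p ∈ m.divisorsAntidiagonal, F p =
        (∑ p ∈ m.divisorsAntidiagonal, ((ArithmeticFunction.moebius p.1 : ℤ) : ℝ)) * G m := by
      rw [Finset.sum_mul]
      refine Finset.sum_congr rfl fun p hp => ?_
      rw [hFdef]
      simp only
      rw [(Nat.mem_divisorsAntidiagonal.mp hp).1]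
    rw [this]
    have hmz : ∑ p ∈ m.divisorsAntidiagonal, ((ArithmeticFunction.moebius p.1 : ℤ) : ℝ) =
        (((ArithmeticFunction.moebius * ArithmeticFunction.zeta :
          ArithmeticFunction ℤ) m : ℤ) : ℝ) := by
      rw [ArithmeticFunction.coe_mul_zeta_apply]
      push_cast
      rw [Nat.sum_divisorsAntidiagonal (fun a b => ((ArithmeticFunction.moebius a : ℤ) : ℝ))]
    rw [hmz, ArithmeticFunction.moebius_mul_coe_zeta, ArithmeticFunction.one_apply]
    rcases eq_or_ne m 1 with rfl | hm1
    · simp [hGdef]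
    · simp [hm1]
  rw [hfibeq] at hfiber
  have hx : HasSum (fun m : ℕ => if m = 1 then x else 0) x := hasSum_ite_eq 1 x
  have hSx : (∑' p, F p) = x := hfiber.unique hx
  rw [hSx] at hshift
  -- Conclude
  have hneg : HasSum (fun k : ℕ => ((ArithmeticFunction.moebius (k + 1) : ℝ) / (k + 1 : ℝ)) *
      Real.log (1 - x ^ (k + 1))) (-x) := by
    have := hshift.neg
    have e : (fun k : ℕ => ((ArithmeticFunction.moebius (k + 1) : ℝ) / (k + 1 : ℝ)) *
        Real.log (1 - x ^ (k + 1))) = fun b => -h (b + 1) := by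
      funext k
      rw [hhdef]
      push_cast
      ring
    rw [e]
    exact this
  rw [hneg.tsum_eq, neg_neg]
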